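/- Let e¹,f¹,...,e^{2n},f^{2n} be the standard dual basis of ℝ^{4n}, ω₂ = Σᵢ (e^{2i-1}∧f^{2i-1} − e^{2i}∧f^{2i}), ω₁ = Σᵢ λᵢ(e^{2i-1}∧f^{2i} + e^{2i}∧f^{2i-1}), B = Σᵢ μᵢ(e^{2i-1}∧f^{2i} + e^{2i}∧f^{2i-1}) with λᵢ² + μᵢ² = 1 for each i. Then A = Bω₂⁻¹ and D = ω₁ω₂⁻¹ satisfy AD = DA and A² + D² = −Id. -/
import Mathlib


open Matrix

/-- The matrix of `ω₂ = Σᵢ (e^{2i-1}∧f^{2i-1} − e^{2i}∧f^{2i})` on `ℝ^{4n}`, in the basis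
`e_{2i-1}, f_{2i-1}, e_{2i}, f_{2i}` (the `i`-th `4`-dimensional block). -/
noncomputable def omega2Mat (n : ℕ) : Matrix (Fin 4 × Fin n) (Fin 4 × Fin n) ℝ :=
  blockDiagonal fun _ : Fin n =>
    !![0, 1, 0, 0; -1, 0, 0, 0; 0, 0, 0, -1; 0, 0, 1, 0]

/-- The matrix of `ω₁ = Σᵢ λᵢ(e^{2i-1}∧f^{2i} + e^{2i}∧f^{2i-1})`. -/
noncomputable def omega1Mat (n : ℕ) (lam : Fin n → ℝ) :
    Matrix (Fin 4 × Fin n) (Fin 4 × Fin n) ℝ :=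
  blockDiagonal fun i : Fin n =>
    lam i • !![0, 0, 0, 1; 0, 0, -1, 0; 0, 1, 0, 0; -1, 0, 0, 0]

/-- The matrix of `B = Σᵢ μᵢ(e^{2i-1}∧f^{2i} + e^{2i}∧f^{2i-1})`. -/
noncomputable def BMat (n : ℕ) (mu : Fin n → ℝ) :
    Matrix (Fin 4 × Fin n) (Fin 4 × Fin n) ℝ :=
  blockDiagonal fun i : Fin n =>
    mu i • !![0, 0, 0, 1; 0, 0, -1, 0; 0, 1, 0, 0; -1, 0, 0, 0]

namespace Stmt15Aux

noncomputable def M : Matrix (Fin 4) (Fin 4) ℝ :=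
  !![0, 1, 0, 0; -1, 0, 0, 0; 0, 0, 0, -1; 0, 0, 1, 0]

noncomputable def Q : Matrix (Fin 4) (Fin 4) ℝ :=
  !![0, 0, -1, 0; 0, 0, 0, -1; 1, 0, 0, 0; 0, 1, 0, 0]

lemma hMN : M * (-M) = 1 := by
  ext i j
  fin_cases i <;> fin_cases j <;>
    simp [M, Matrix.mul_apply, Fin.sum_univ_four, Matrix.one_apply,
      Matrix.vecHead, Matrix.vecTail]

lemma hPQ : !![(0:ℝ), 0, 0, 1; 0, 0, -1, 0; 0, 1, 0, 0; -1, 0, 0, 0] * (-M) = Q := by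
  ext i j
  fin_cases i <;> fin_cases j <;>
    simp [M, Q, Matrix.mul_apply, Fin.sum_univ_four, Matrix.vecHead, Matrix.vecTail]

lemma hQQ : Q * Q = -1 := by
  ext i j
  fin_cases i <;> fin_cases j <;>
    simp [Q, Matrix.mul_apply, Fin.sum_univ_four, Matrix.one_apply,
      Matrix.vecHead, Matrix.vecTail]

lemma omega2_inv (n : ℕ) :
    (omega2Mat n)⁻¹ = blockDiagonal fun _ : Fin n => -M := by
  apply inv_eq_right_inv
  rw [omega2Mat, ← blockDiagonal_mul]
  show blockDiagonal (fun _ : Fin n => M * (-M)) = 1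
  simp only [hMN]
  exact blockDiagonal_one

end Stmt15Aux

/-- With `λᵢ² + μᵢ² = 1`, the maps `A = Bω₂⁻¹` and `D = ω₁ω₂⁻¹`
satisfy `AD = DA` and `A² + D² = -Id`. -/
theorem stmt15 (n : ℕ) (lam mu : Fin n → ℝ)
    (h : ∀ i, lam i ^ 2 + mu i ^ 2 = 1)
    (A D : Matrix (Fin 4 × Fin n) (Fin 4 × Fin n) ℝ)
    (hA : A = BMat n mu * (omega2Mat n)⁻¹)
    (hD : D = omega1Mat n lam * (omega2Mat n)⁻¹) :
    A * D = D * A ∧ A * A + D * D = -1 := by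
  have hA' : A = blockDiagonal fun i : Fin n => mu i • Stmt15Aux.Q := by
    rw [hA, Stmt15Aux.omega2_inv, BMat, ← blockDiagonal_mul]
    refine congrArg _ (funext fun k => ?_)
    rw [smul_mul_assoc, Stmt15Aux.hPQ]
  have hD' : D = blockDiagonal fun i : Fin n => lam i • Stmt15Aux.Q := by
    rw [hD, Stmt15Aux.omega2_inv, omega1Mat, ← blockDiagonal_mul]
    refine congrArg _ (funext fun k => ?_)
    rw [smul_mul_assoc, Stmt15Aux.hPQ]
  constructor
  · rw [hA', hD', ← blockDiagonal_mul, ← blockDiagonal_mul]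
    refine congrArg _ (funext fun k => ?_)
    rw [smul_mul_smul_comm, smul_mul_smul_comm, mul_comm]
  · rw [hA', hD', ← blockDiagonal_mul, ← blockDiagonal_mul, ← blockDiagonal_add]
    have key : ((fun k : Fin n => (mu k • Stmt15Aux.Q) * (mu k • Stmt15Aux.Q))
        + fun k : Fin n => (lam k • Stmt15Aux.Q) * (lam k • Stmt15Aux.Q))
        = fun _ : Fin n => -(1 : Matrix (Fin 4) (Fin 4) ℝ) := by
      funext k
      have hk := h k
      simp only [Pi.add_apply, smul_mul_smul_comm, Stmt15Aux.hQQ, smul_neg, ← add_smul,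
        ← neg_smul]
      rw [show -(mu k * mu k) + -(lam k * lam k) = -(lam k ^ 2 + mu k ^ 2) by ring, hk]
      simp
    rw [key, show (fun _ : Fin n => -(1 : Matrix (Fin 4) (Fin 4) ℝ))
        = -(1 : Fin n → Matrix (Fin 4) (Fin 4) ℝ) from rfl,
      blockDiagonal_neg, blockDiagonal_one]
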